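/- For c > 0, the function P(λ) = c(2(1-λ)/λ + 2√(1-λ)/λ) (i.e., γ = 2) is convex on the interval (0, 8/9] and concave on (8/9, 1). -/

import Mathlib

open Real Set

noncomputable def P1 (c : ℝ) : ℝ → ℝ :=
  fun x => c * (x - 2 - 2 * Real.sqrt (1 - x)) / (Real.sqrt (1 - x) * x ^ 2)

noncomputable def P2 (c : ℝ) : ℝ → ℝ :=
  fun x => c * (3 * Real.sqrt (1 - x) - 1) * (Real.sqrt (1 - x) + 1) ^ 3 /
    (2 * Real.sqrt (1 - x) ^ 3 * x ^ 3)

lemma sqrt_deriv {x : ℝ} (h1x : 0 < 1 - x) :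
    HasDerivAt (fun lam : ℝ => Real.sqrt (1 - lam)) (-(1 / (2 * Real.sqrt (1 - x)))) x := by
  have h := (Real.hasDerivAt_sqrt (ne_of_gt h1x)).comp x
    ((hasDerivAt_const x (1:ℝ)).sub (hasDerivAt_id x))
  exact h.congr_deriv (by ring)

lemma hasDerivAt_P (c x : ℝ) (hx : 0 < x) (hx1 : x < 1) :
    HasDerivAt (fun lam => c * (2 * (1 - lam) / lam + 2 * Real.sqrt (1 - lam) / lam))
      (P1 c x) x := by
  have h1x : (0:ℝ) < 1 - x := by linarith
  have hs : 0 < Real.sqrt (1 - x) := Real.sqrt_pos.2 h1x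
  have hs2 : Real.sqrt (1 - x) ^ 2 = 1 - x := Real.sq_sqrt h1x.le
  have hnum : HasDerivAt (fun lam : ℝ => 2*c*(1-lam) + 2*c*Real.sqrt (1-lam))
      (2*c*(-1) + 2*c*(-(1/(2*Real.sqrt (1-x))))) x := by
    have h1 : HasDerivAt (fun lam : ℝ => 2*c*(1-lam)) (2*c*(-1)) x := by
      have := ((hasDerivAt_const x (1:ℝ)).sub (hasDerivAt_id x)).const_mul (2*c)
      simpa using this
    exact h1.add ((sqrt_deriv h1x).const_mul (2*c))
  have hden : HasDerivAt (fun lam : ℝ => lam) 1 x := hasDerivAt_id x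
  have h := hnum.div hden (ne_of_gt hx)
  have heq : (fun lam => c * (2 * (1 - lam) / lam + 2 * Real.sqrt (1 - lam) / lam))
      = (fun lam : ℝ => (2*c*(1-lam) + 2*c*Real.sqrt (1-lam)) / lam) := by
    funext lam; ring
  rw [heq]
  refine h.congr_deriv ?_
  symm
  unfold P1
  rw [div_eq_div_iff (by positivity) (by positivity)]
  field_simp
  ring_nf
  linear_combination (2*c) * hs2

lemma hasDerivAt_P1 (c x : ℝ) (hx : 0 < x) (hx1 : x < 1) :
    HasDerivAt (P1 c) (P2 c x) x := by
  have h1x : (0:ℝ) < 1 - x := by linarith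
  have hs : 0 < Real.sqrt (1 - x) := Real.sqrt_pos.2 h1x
  have hs2 : Real.sqrt (1 - x) ^ 2 = 1 - x := Real.sq_sqrt h1x.le
  have hnum : HasDerivAt (fun lam : ℝ => c * (lam - 2 - 2 * Real.sqrt (1 - lam)))
      (c * (1 - 2 * (-(1/(2*Real.sqrt (1-x)))))) x := by
    have h1 : HasDerivAt (fun lam : ℝ => lam - 2 - 2 * Real.sqrt (1 - lam))
        (1 - 2 * (-(1/(2*Real.sqrt (1-x))))) x := by
      have := ((hasDerivAt_id x).sub (hasDerivAt_const x 2)).sub ((sqrt_deriv h1x).const_mul 2)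
      exact this.congr_deriv (by ring)
    simpa [mul_comm] using h1.const_mul c
  have hden : HasDerivAt (fun lam : ℝ => Real.sqrt (1 - lam) * lam ^ 2)
      ((-(1/(2*Real.sqrt (1-x)))) * x ^ 2 + Real.sqrt (1 - x) * (2 * x)) x := by
    have hp : HasDerivAt (fun lam : ℝ => lam ^ 2) (2 * x) x := by
      simpa using (hasDerivAt_pow 2 x)
    exact (sqrt_deriv h1x).mul hp
  have hden0 : Real.sqrt (1 - x) * x ^ 2 ≠ 0 := by positivity
  have h := hnum.div hden hden0
  have : HasDerivAt (P1 c) _ x := h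
  convert this using 1
  unfold P2
  rw [div_eq_div_iff (by positivity) (by positivity)]
  field_simp
  ring_nf
  linear_combination (c*(3*Real.sqrt (1-x)^2+1-x)) * hs2


lemma P2_nonneg (c x : ℝ) (hc : 0 < c) (hx : 0 < x) (hx9 : x < 8/9) : 0 ≤ P2 c x := by
  have h1x : (0:ℝ) < 1 - x := by linarith
  have hs : 0 < Real.sqrt (1 - x) := Real.sqrt_pos.2 h1x
  have hs3 : (1:ℝ)/3 < Real.sqrt (1 - x) := by
    rw [show (1:ℝ)/3 = Real.sqrt (1/9) by
      rw [show (1:ℝ)/9 = (1/3)^2 by norm_num, Real.sqrt_sq (by norm_num)]]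
    exact Real.sqrt_lt_sqrt (by norm_num) (by linarith)
  unfold P2
  apply div_nonneg _ (by positivity)
  have h1 : 0 ≤ 3 * Real.sqrt (1 - x) - 1 := by linarith
  positivity

lemma P2_nonpos (c x : ℝ) (hc : 0 < c) (hx9 : 8/9 < x) (hx1 : x < 1) : P2 c x ≤ 0 := by
  have h1x : (0:ℝ) < 1 - x := by linarith
  have hs : 0 < Real.sqrt (1 - x) := Real.sqrt_pos.2 h1x
  have hs3 : Real.sqrt (1 - x) < 1/3 := by
    rw [show (1:ℝ)/3 = Real.sqrt (1/9) by
      rw [show (1:ℝ)/9 = (1/3)^2 by norm_num, Real.sqrt_sq (by norm_num)]]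
    exact Real.sqrt_lt_sqrt (by linarith) (by linarith)
  unfold P2
  apply div_nonpos_of_nonpos_of_nonneg _ (by positivity)
  have h1 : 3 * Real.sqrt (1 - x) - 1 < 0 := by linarith
  have h2 : (0:ℝ) < (Real.sqrt (1 - x) + 1) ^ 3 := by positivity
  have h3 : c * (3 * Real.sqrt (1 - x) - 1) < 0 := mul_neg_of_pos_of_neg hc h1
  exact le_of_lt (mul_neg_of_neg_of_pos h3 h2)

theorem stmt_6 (c : ℝ) (hc : 0 < c) :
    let P : ℝ → ℝ := fun lam => c * (2 * (1 - lam) / lam + 2 * Real.sqrt (1 - lam) / lam)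
    ConvexOn ℝ (Ioc (0:ℝ) (8/9)) P ∧ ConcaveOn ℝ (Ioo (8/9 : ℝ) 1) P := by
  intro P
  constructor
  · have hint : interior (Ioc (0:ℝ) (8/9)) = Ioo (0:ℝ) (8/9) := interior_Ioc
    apply convexOn_of_hasDerivWithinAt2_nonneg (f' := P1 c) (f'' := P2 c) (convex_Ioc _ _)
    · intro x hx
      exact (hasDerivAt_P c x hx.1 (by linarith [hx.2] : x < 1)).continuousAt.continuousWithinAt
    · intro x hx
      rw [hint] at hx
      exact (hasDerivAt_P c x hx.1 (by linarith [hx.2])).hasDerivWithinAt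
    · intro x hx
      rw [hint] at hx
      exact (hasDerivAt_P1 c x hx.1 (by linarith [hx.2])).hasDerivWithinAt
    · intro x hx
      rw [hint] at hx
      exact P2_nonneg c x hc hx.1 hx.2
  · have hint : interior (Ioo (8/9:ℝ) 1) = Ioo (8/9:ℝ) 1 := isOpen_Ioo.interior_eq
    apply concaveOn_of_hasDerivWithinAt2_nonpos (f' := P1 c) (f'' := P2 c) (convex_Ioo _ _)
    · intro x hx
      exact (hasDerivAt_P c x (by linarith [hx.1]) hx.2).continuousAt.continuousWithinAt
    · intro x hx
      rw [hint] at hx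
      exact (hasDerivAt_P c x (by linarith [hx.1]) hx.2).hasDerivWithinAt
    · intro x hx
      rw [hint] at hx
      exact (hasDerivAt_P1 c x (by linarith [hx.1]) hx.2).hasDerivWithinAt
    · intro x hx
      rw [hint] at hx
      exact P2_nonpos c x hc hx.1 hx.2
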